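/- arXiv:math/0409025 — 4 statements merged into one kernel-verified Lean document; each statement's English description precedes it below -/
import Mathlib

section
/- The number of noncrossing partitions of {1,...,n} is the Catalan number C_n = (1/(n+1))·binom(2n, n). -/
open Finset

/-- Two elements lie in the same block of the partition `P`. -/
def SameBlock {n : ℕ} (P : Finpartition (univ : Finset (Fin n))) (i j : Fin n) : Prop :=
  ∃ t ∈ P.parts, i ∈ t ∧ j ∈ t

/-- A partition of `{1,…,n}` is noncrossing if there are no `i < j < k < l` with
`i ∼ k`, `j ∼ l` and `i ≁ j`. -/
def IsNoncrossing {n : ℕ} (P : Finpartition (univ : Finset (Fin n))) : Prop :=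
  ¬ ∃ i j k l : Fin n, i < j ∧ j < k ∧ k < l ∧
      SameBlock P i k ∧ SameBlock P j l ∧ ¬ SameBlock P i j

/-- Noncrossing, phrased for setoids. -/
def NCS {n : ℕ} (s : Setoid (Fin n)) : Prop :=
  ¬ ∃ i j k l : Fin n, i < j ∧ j < k ∧ k < l ∧
      s.r i k ∧ s.r j l ∧ ¬ s.r i j

section Bridge

open scoped Classical

variable {n : ℕ}

/-- The setoid associated to a finpartition. -/
def toSetoid (P : Finpartition (univ : Finset (Fin n))) : Setoid (Fin n) where
  r := SameBlock P
  iseqv := by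
    refine ⟨fun i => ?_, fun {i j} h => ?_, fun {i j k} h1 h2 => ?_⟩
    · obtain ⟨t, ht, hit⟩ := P.exists_mem (mem_univ i)
      exact ⟨t, ht, hit, hit⟩
    · obtain ⟨t, ht, hit, hjt⟩ := h
      exact ⟨t, ht, hjt, hit⟩
    · obtain ⟨t, ht, hit, hjt⟩ := h1
      obtain ⟨u, hu, hju, hku⟩ := h2
      have : t = u := P.eq_of_mem_parts ht hu hjt hju
      exact ⟨t, ht, hit, this ▸ hku⟩

lemma sameBlock_iff_mem_part (P : Finpartition (univ : Finset (Fin n))) (i j : Fin n) :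
    SameBlock P i j ↔ j ∈ P.part i := by
  constructor
  · rintro ⟨t, ht, hit, hjt⟩
    rw [P.part_eq_of_mem ht hit]; exact hjt
  · intro h
    exact ⟨P.part i, P.part_mem.2 (mem_univ i), P.mem_part (mem_univ i), h⟩

lemma toSetoid_ofSetoid (s : Setoid (Fin n)) :
    toSetoid (Finpartition.ofSetoid s) = s := by
  apply Setoid.ext
  intro a b
  show SameBlock _ a b ↔ _
  rw [sameBlock_iff_mem_part, Finpartition.mem_part_ofSetoid_iff_rel]

lemma ofSetoid_toSetoid (P : Finpartition (univ : Finset (Fin n))) :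
    Finpartition.ofSetoid (toSetoid P) = P := by
  ext t
  have key : ∀ a : Fin n, ({b | (toSetoid P).r a b} : Finset (Fin n)) = P.part a := by
    intro a
    ext b
    simp only [Finset.mem_filter, Finset.mem_univ, true_and]
    exact sameBlock_iff_mem_part P a b
  constructor
  · intro ht
    simp only [Finpartition.ofSetoid, Finpartition.ofSetSetoid_parts, Finset.mem_image] at ht
    obtain ⟨a, -, ha⟩ := ht
    rw [key] at ha
    exact ha ▸ P.part_mem.2 (mem_univ a)
  · intro ht
    obtain ⟨a, ha⟩ := P.nonempty_of_mem_parts ht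
    simp only [Finpartition.ofSetoid, Finpartition.ofSetSetoid_parts, Finset.mem_image]
    exact ⟨a, mem_univ a, by rw [key, P.part_eq_of_mem ht ha]⟩

/-- The bridge between noncrossing finpartitions and noncrossing setoids. -/
noncomputable def bridge :
    {P : Finpartition (univ : Finset (Fin n)) // IsNoncrossing P} ≃
      {s : Setoid (Fin n) // NCS s} where
  toFun x := ⟨toSetoid x.1, x.2⟩
  invFun y := ⟨Finpartition.ofSetoid y.1, by
    have h : NCS (toSetoid (Finpartition.ofSetoid y.1)) := by
      rw [toSetoid_ofSetoid]; exact y.2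
    exact h⟩
  left_inv x := Subtype.ext (ofSetoid_toSetoid x.1)
  right_inv y := Subtype.ext (toSetoid_ofSetoid y.1)

end Bridge

instance setoidFinite {m : ℕ} : Finite (Setoid (Fin m)) :=
  Finite.of_injective (fun s => s.r) (fun a b h => Setoid.ext (fun x y => iff_of_eq (congrFun (congrFun h x) y)))

/-! ### The first-return statistic -/

/-- The set used to define `kNat`. -/
def kSet (n : ℕ) (s : Setoid (Fin (n+1))) : Set ℕ :=
  {m | m = n+1 ∨ ∃ h : m < n+1, 0 < m ∧ s.r 0 ⟨m, h⟩}

/-- The smallest positive element related to `0`, or `n+1` if there is none. -/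
noncomputable def kNat (n : ℕ) (s : Setoid (Fin (n+1))) : ℕ := sInf (kSet n s)

lemma kNat_mem (n : ℕ) (s : Setoid (Fin (n+1))) : kNat n s ∈ kSet n s :=
  Nat.sInf_mem ⟨n+1, Or.inl rfl⟩

lemma kNat_le (n : ℕ) (s : Setoid (Fin (n+1))) : kNat n s ≤ n+1 :=
  Nat.sInf_le (Or.inl rfl)

lemma kNat_pos (n : ℕ) (s : Setoid (Fin (n+1))) : 0 < kNat n s := by
  rcases kNat_mem n s with h | ⟨_, h, _⟩ <;> omega

lemma kNat_eq {n : ℕ} {s : Setoid (Fin (n+1))} {K : ℕ} (hK : K ∈ kSet n s)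
    (hmin : ∀ m, m < K → m ∉ kSet n s) : kNat n s = K :=
  le_antisymm (Nat.sInf_le hK)
    (not_lt.1 fun h => hmin _ h (kNat_mem n s))

lemma kNat_min {n : ℕ} {s : Setoid (Fin (n+1))} {m : ℕ} (h : m < n+1) (h0 : 0 < m)
    (hm : m < kNat n s) : ¬ s.r 0 ⟨m, h⟩ := by
  intro hr
  have : kNat n s ≤ m := Nat.sInf_le (show m ∈ kSet n s from Or.inr ⟨h, h0, hr⟩)
  omega

lemma kNat_rel {n : ℕ} {s : Setoid (Fin (n+1))} (h : kNat n s < n+1) :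
    s.r 0 ⟨kNat n s, h⟩ := by
  rcases kNat_mem n s with h' | ⟨h', _, hr⟩
  · omega
  · exact hr

/-- Closure property: nothing strictly between `0` and `kNat` is related to anything
at or beyond `kNat`. -/
lemma not_rel_across {n : ℕ} {s : Setoid (Fin (n+1))} (hNC : NCS s) {i j : Fin (n+1)}
    (hi0 : 0 < i.val) (hik : i.val < kNat n s) (hkj : kNat n s ≤ j.val) : ¬ s.r i j := by
  intro hr
  have hk : kNat n s < n + 1 := lt_of_le_of_lt hkj j.isLt
  have h0k : s.r 0 ⟨kNat n s, hk⟩ := kNat_rel hk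
  have h0i : ¬ s.r 0 i := by
    have := kNat_min (m := i.val) i.isLt hi0 hik
    simpa using this
  rcases eq_or_lt_of_le hkj with heq | hlt
  · -- j.val = kNat, so s.r 0 j, hence s.r 0 i, contradiction
    have hj : (⟨kNat n s, hk⟩ : Fin (n+1)) = j := Fin.ext heq
    rw [hj] at h0k
    exact h0i (s.trans h0k (s.symm hr))
  · -- genuine crossing 0 < i < kNat < j
    exact hNC ⟨0, i, ⟨kNat n s, hk⟩, j, by rw [Fin.lt_def, Fin.val_zero]; exact hi0,
      by simp [Fin.lt_def]; omega, by simp [Fin.lt_def]; omega, h0k, hr, h0i⟩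

/-! ### Lifting relations to `ℕ` and the backward construction -/

/-- Lift a setoid on `Fin m` to a reflexive relation on `ℕ`. -/
def liftRel {m : ℕ} (s : Setoid (Fin m)) (a b : ℕ) : Prop :=
  a = b ∨ ∃ (ha : a < m) (hb : b < m), s.r ⟨a, ha⟩ ⟨b, hb⟩

lemma liftRel_iff {m : ℕ} (s : Setoid (Fin m)) {a b : ℕ} (ha : a < m) (hb : b < m) :
    liftRel s a b ↔ s.r ⟨a, ha⟩ ⟨b, hb⟩ := by
  constructor
  · rintro (rfl | ⟨_, _, h⟩)
    · exact s.refl _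
    · exact h
  · intro h; exact Or.inr ⟨ha, hb, h⟩

lemma liftRel_refl {m : ℕ} (s : Setoid (Fin m)) (a : ℕ) : liftRel s a a := Or.inl rfl

lemma liftRel_symm {m : ℕ} (s : Setoid (Fin m)) {a b : ℕ} (h : liftRel s a b) :
    liftRel s b a := by
  rcases h with rfl | ⟨ha, hb, h⟩
  · exact Or.inl rfl
  · exact Or.inr ⟨hb, ha, s.symm h⟩

lemma liftRel_trans {m : ℕ} (s : Setoid (Fin m)) {a b c : ℕ} (h1 : liftRel s a b)
    (h2 : liftRel s b c) : liftRel s a c := by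
  rcases h1 with rfl | ⟨ha, hb, h1⟩
  · exact h2
  · rcases h2 with rfl | ⟨hb', hc, h2⟩
    · exact Or.inr ⟨ha, hb, h1⟩
    · exact Or.inr ⟨ha, hc, s.trans h1 h2⟩

variable {n g : ℕ}

/-- The sum setoid on `ℕ ⊕ ℕ`. -/
def sumSetoid (s₁ : Setoid (Fin g)) (s₂ : Setoid (Fin (n-g))) : Setoid (ℕ ⊕ ℕ) where
  r := Sum.LiftRel (liftRel s₁) (liftRel s₂)
  iseqv := by
    refine ⟨fun x => ?_, fun {x y} h => ?_, fun {x y z} h1 h2 => ?_⟩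
    · cases x with
      | inl a => exact Sum.LiftRel.inl (liftRel_refl _ _)
      | inr a => exact Sum.LiftRel.inr (liftRel_refl _ _)
    · cases h with
      | inl h => exact Sum.LiftRel.inl (liftRel_symm _ h)
      | inr h => exact Sum.LiftRel.inr (liftRel_symm _ h)
    · cases h1 with
      | inl h1 => cases h2 with
        | inl h2 => exact Sum.LiftRel.inl (liftRel_trans _ h1 h2)
      | inr h1 => cases h2 with
        | inr h2 => exact Sum.LiftRel.inr (liftRel_trans _ h1 h2)

/-- The coordinate map sending `[1,g]` to the left factor and `{0} ∪ [g+1,n]` to the right. -/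
def cmap (g n : ℕ) (i : Fin (n+1)) : ℕ ⊕ ℕ :=
  if 0 < i.val ∧ i.val ≤ g then Sum.inl (i.val - 1) else Sum.inr (i.val - (g+1))

/-- The backward construction: glue `s₁` into the gap `(0, g+1)` and `s₂` onto
`{0} ∪ [g+1, n]` (with `0` joined to the class of `g+1`). -/
def back (s₁ : Setoid (Fin g)) (s₂ : Setoid (Fin (n-g))) : Setoid (Fin (n+1)) :=
  Setoid.comap (cmap g n) (sumSetoid s₁ s₂)

lemma back_rel (s₁ : Setoid (Fin g)) (s₂ : Setoid (Fin (n-g))) (i j : Fin (n+1)) :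
    (back s₁ s₂).r i j ↔
      Sum.LiftRel (liftRel s₁) (liftRel s₂) (cmap g n i) (cmap g n j) := Iff.rfl

lemma cmap_left {i : Fin (n+1)} (h1 : 0 < i.val) (h2 : i.val ≤ g) :
    cmap g n i = Sum.inl (i.val - 1) := if_pos ⟨h1, h2⟩

lemma cmap_right {i : Fin (n+1)} (h : i.val = 0 ∨ g < i.val) :
    cmap g n i = Sum.inr (i.val - (g+1)) := if_neg (by omega)

/-! ### Embeddings and comap -/

def emb1 (hg : g ≤ n) (a : Fin g) : Fin (n+1) := ⟨a.val + 1, by have := a.isLt; omega⟩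

def emb2 (a : Fin (n-g)) : Fin (n+1) := ⟨a.val + g + 1, by have := a.isLt; omega⟩

lemma comap_r {α β : Type*} (f : α → β) (s : Setoid β) (x y : α) :
    (Setoid.comap f s).r x y ↔ s.r (f x) (f y) := Iff.rfl

lemma NCS_comap {a b : ℕ} {f : Fin a → Fin b} (hf : StrictMono f) {s : Setoid (Fin b)}
    (h : NCS s) : NCS (Setoid.comap f s) := by
  rintro ⟨i, j, k, l, h1, h2, h3, r1, r2, r3⟩
  exact h ⟨f i, f j, f k, f l, hf h1, hf h2, hf h3, (comap_r f s i k).1 r1,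
    (comap_r f s j l).1 r2, fun c => r3 ((comap_r f s i j).2 c)⟩

lemma emb1_strictMono (hg : g ≤ n) : StrictMono (emb1 (n := n) hg) := by
  intro a b h
  simp only [emb1, Fin.lt_def] at *
  omega

lemma emb2_strictMono : StrictMono (emb2 (n := n) (g := g)) := by
  intro a b h
  simp only [emb2, Fin.lt_def] at *
  omega

lemma liftRel_comap_emb1 (hg : g ≤ n) {s : Setoid (Fin (n+1))} {a b : ℕ}
    (ha : a < g) (hb : b < g) :
    liftRel (Setoid.comap (emb1 hg) s) a b ↔
      s.r ⟨a + 1, by omega⟩ ⟨b + 1, by omega⟩ := by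
  rw [liftRel_iff _ ha hb]
  exact Iff.rfl

lemma liftRel_comap_emb2 {s : Setoid (Fin (n+1))} {a b : ℕ}
    (ha : a < n - g) (hb : b < n - g) :
    liftRel (Setoid.comap (emb2 (n := n) (g := g)) s) a b ↔
      s.r ⟨a + g + 1, by omega⟩ ⟨b + g + 1, by omega⟩ := by
  rw [liftRel_iff _ ha hb]
  exact Iff.rfl

/-! ### Properties of `back` -/

lemma back_NCS {s₁ : Setoid (Fin g)} {s₂ : Setoid (Fin (n-g))} (h₁ : NCS s₁)
    (h₂ : NCS s₂) : NCS (back s₁ s₂) := by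
  rintro ⟨i, j, k, l, hij, hjk, hkl, rik, rjl, nij⟩
  rw [Fin.lt_def] at hij hjk hkl
  rw [back_rel] at rik rjl
  by_cases hi1 : 0 < i.val ∧ i.val ≤ g
  · -- region 1
    have hk1 : 0 < k.val ∧ k.val ≤ g := by
      by_contra hk
      rw [cmap_left hi1.1 hi1.2, cmap_right (by omega)] at rik
      cases rik
    have hj1 : 0 < j.val ∧ j.val ≤ g := ⟨by omega, by omega⟩
    have hl1 : 0 < l.val ∧ l.val ≤ g := by
      by_contra hl
      rw [cmap_left hj1.1 hj1.2, cmap_right (by omega)] at rjl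
      cases rjl
    rw [cmap_left hi1.1 hi1.2, cmap_left hk1.1 hk1.2, Sum.liftRel_inl_inl] at rik
    rw [cmap_left hj1.1 hj1.2, cmap_left hl1.1 hl1.2, Sum.liftRel_inl_inl] at rjl
    refine h₁ ⟨⟨i.val - 1, by omega⟩, ⟨j.val - 1, by omega⟩, ⟨k.val - 1, by omega⟩,
      ⟨l.val - 1, by omega⟩, ?_, ?_, ?_, ?_, ?_, ?_⟩
    · simp only [Fin.lt_def]; omega
    · simp only [Fin.lt_def]; omega
    · simp only [Fin.lt_def]; omega
    · exact (liftRel_iff _ (by omega) (by omega)).1 rik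
    · exact (liftRel_iff _ (by omega) (by omega)).1 rjl
    · intro hr
      apply nij
      rw [back_rel, cmap_left hi1.1 hi1.2, cmap_left hj1.1 hj1.2, Sum.liftRel_inl_inl]
      exact (liftRel_iff _ (by omega) (by omega)).2 hr
  · by_cases hi0 : i.val = 0
    · -- i = 0
      have hk2 : g < k.val := by
        by_contra hk
        rw [cmap_right (Or.inl hi0), cmap_left (by omega) (by omega)] at rik
        cases rik
      by_cases hj1 : 0 < j.val ∧ j.val ≤ g
      · have hl1 : 0 < l.val ∧ l.val ≤ g := by
          by_contra hl
          rw [cmap_left hj1.1 hj1.2, cmap_right (by omega)] at rjl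
          cases rjl
        omega
      · have hj2 : g < j.val := by omega
        have hne : g + 1 < j.val := by
          rcases Nat.lt_or_ge (g+1) j.val with h' | h'
          · exact h'
          · exfalso
            apply nij
            rw [back_rel, cmap_right (Or.inl hi0), cmap_right (Or.inr hj2)]
            exact Sum.LiftRel.inr (Or.inl (by omega))
        have hjn : j.val < n + 1 := j.isLt
        have hln : l.val < n + 1 := l.isLt
        rw [cmap_right (Or.inl hi0), cmap_right (Or.inr hk2), Sum.liftRel_inr_inr] at rik
        rw [cmap_right (Or.inr hj2), cmap_right (Or.inr (by omega)), Sum.liftRel_inr_inr] at rjl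
        refine h₂ ⟨⟨i.val - (g+1), by omega⟩, ⟨j.val - (g+1), by omega⟩,
          ⟨k.val - (g+1), by omega⟩, ⟨l.val - (g+1), by omega⟩, ?_, ?_, ?_, ?_, ?_, ?_⟩
        · simp only [Fin.lt_def]; omega
        · simp only [Fin.lt_def]; omega
        · simp only [Fin.lt_def]; omega
        · exact (liftRel_iff _ (by omega) (by omega)).1 rik
        · exact (liftRel_iff _ (by omega) (by omega)).1 rjl
        · intro hr
          apply nij
          rw [back_rel, cmap_right (Or.inl hi0), cmap_right (Or.inr hj2), Sum.liftRel_inr_inr]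
          exact (liftRel_iff _ (by omega) (by omega)).2 hr
    · -- g < i
      have hi2 : g < i.val := by omega
      have hln : l.val < n + 1 := l.isLt
      rw [cmap_right (Or.inr hi2), cmap_right (Or.inr (by omega)), Sum.liftRel_inr_inr] at rik
      rw [cmap_right (Or.inr (by omega)), cmap_right (Or.inr (by omega)),
        Sum.liftRel_inr_inr] at rjl
      refine h₂ ⟨⟨i.val - (g+1), by omega⟩, ⟨j.val - (g+1), by omega⟩,
        ⟨k.val - (g+1), by omega⟩, ⟨l.val - (g+1), by omega⟩, ?_, ?_, ?_, ?_, ?_, ?_⟩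
      · simp only [Fin.lt_def]; omega
      · simp only [Fin.lt_def]; omega
      · simp only [Fin.lt_def]; omega
      · exact (liftRel_iff _ (by omega) (by omega)).1 rik
      · exact (liftRel_iff _ (by omega) (by omega)).1 rjl
      · intro hr
        apply nij
        rw [back_rel, cmap_right (Or.inr hi2), cmap_right (Or.inr (by omega)),
          Sum.liftRel_inr_inr]
        exact (liftRel_iff _ (by omega) (by omega)).2 hr

lemma back_k (hg : g ≤ n) (s₁ : Setoid (Fin g)) (s₂ : Setoid (Fin (n-g))) :
    kNat n (back s₁ s₂) = g + 1 := by
  apply kNat_eq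
  · by_cases h : g + 1 = n + 1
    · exact Or.inl h
    · refine Or.inr ⟨by omega, by omega, ?_⟩
      rw [back_rel, cmap_right (Or.inl (by simp)), cmap_right (Or.inr (by simp))]
      exact Sum.LiftRel.inr (Or.inl (by simp))
  · intro m hm hmem
    rcases hmem with h | ⟨h, h0, hr⟩
    · omega
    · rw [back_rel, cmap_right (Or.inl (by simp)), cmap_left (by simp only [Fin.val_mk]; omega) (by simp only [Fin.val_mk]; omega)] at hr
      cases hr

lemma comap_emb1_back (hg : g ≤ n) (s₁ : Setoid (Fin g)) (s₂ : Setoid (Fin (n-g))) :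
    Setoid.comap (emb1 hg) (back s₁ s₂) = s₁ := by
  apply Setoid.ext
  intro a b
  have ha := a.isLt
  have hb := b.isLt
  show (back s₁ s₂).r (emb1 hg a) (emb1 hg b) ↔ s₁.r a b
  rw [back_rel, cmap_left (by simp [emb1]) (by simp [emb1]),
    cmap_left (by simp [emb1]) (by simp [emb1]), Sum.liftRel_inl_inl]
  have e1 : (emb1 hg a).val - 1 = a.val := by simp [emb1]
  have e2 : (emb1 hg b).val - 1 = b.val := by simp [emb1]
  rw [e1, e2, liftRel_iff _ ha hb, Fin.eta, Fin.eta]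

lemma comap_emb2_back (s₁ : Setoid (Fin g)) (s₂ : Setoid (Fin (n-g))) :
    Setoid.comap (emb2 (n := n) (g := g)) (back s₁ s₂) = s₂ := by
  apply Setoid.ext
  intro a b
  have ha := a.isLt
  have hb := b.isLt
  show (back s₁ s₂).r (emb2 a) (emb2 b) ↔ s₂.r a b
  rw [back_rel, cmap_right (Or.inr (by simp [emb2])), cmap_right (Or.inr (by simp [emb2])),
    Sum.liftRel_inr_inr]
  have e1 : (emb2 (n := n) (g := g) a).val - (g+1) = a.val := by simp [emb2]
  have e2 : (emb2 (n := n) (g := g) b).val - (g+1) = b.val := by simp [emb2]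
  rw [e1, e2, liftRel_iff _ ha hb, Fin.eta, Fin.eta]

lemma back_comap (hg : g ≤ n) {s : Setoid (Fin (n+1))} (hNC : NCS s)
    (hk : kNat n s = g + 1) :
    back (Setoid.comap (emb1 hg) s) (Setoid.comap (emb2 (n := n) (g := g)) s) = s := by
  apply Setoid.ext
  intro i j
  show (back (Setoid.comap (emb1 hg) s) (Setoid.comap (emb2 (n := n) (g := g)) s)).r i j ↔ s.r i j
  rw [back_rel]
  have hin := i.isLt
  have hjn := j.isLt
  by_cases hi : 0 < i.val ∧ i.val ≤ g <;> by_cases hj : 0 < j.val ∧ j.val ≤ g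
  · -- both region 1
    rw [cmap_left hi.1 hi.2, cmap_left hj.1 hj.2, Sum.liftRel_inl_inl,
      liftRel_comap_emb1 hg (by omega) (by omega)]
    simp only [show i.val - 1 + 1 = i.val from by omega, show j.val - 1 + 1 = j.val from by omega,
      Fin.eta]
  · -- i region 1, j region 2
    refine iff_of_false ?_ ?_
    · intro h
      rw [cmap_left hi.1 hi.2, cmap_right (by omega)] at h
      cases h
    · rcases (by omega : j.val = 0 ∨ g < j.val) with hj0 | hj2
      · intro h
        have hj' : j = 0 := Fin.ext (by simpa using hj0)
        exact kNat_min (s := s) i.isLt hi.1 (by omega) (by simpa [hj'] using s.symm h)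
      · exact not_rel_across (s := s) hNC hi.1 (by omega) (by omega)
  · -- i region 2, j region 1
    refine iff_of_false ?_ ?_
    · intro h
      rw [cmap_left hj.1 hj.2, cmap_right (by omega)] at h
      cases h
    · rcases (by omega : i.val = 0 ∨ g < i.val) with hi0 | hi2
      · intro h
        have hi' : i = 0 := Fin.ext (by simpa using hi0)
        exact kNat_min (s := s) j.isLt hj.1 (by omega) (by simpa [hi'] using h)
      · intro h
        exact not_rel_across (s := s) hNC hj.1 (by omega) (by omega) (s.symm h)
  · -- both region 2
    rcases (by omega : i.val = 0 ∨ g < i.val) with hi0 | hi2 <;>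
      rcases (by omega : j.val = 0 ∨ g < j.val) with hj0 | hj2
    · -- both zero
      have hij : i = j := Fin.ext (by omega)
      refine iff_of_true ?_ (hij ▸ s.refl i)
      rw [cmap_right (Or.inl hi0), cmap_right (Or.inl hj0)]
      exact Sum.LiftRel.inr (Or.inl (by omega))
    · -- i = 0, g < j
      have hi' : i = 0 := Fin.ext (by simpa using hi0)
      have hgn : g + 1 < n + 1 := by omega
      have r0k : s.r 0 ⟨g+1, hgn⟩ := by
        have h1 : kNat n s < n + 1 := by omega
        have h2 : (⟨kNat n s, h1⟩ : Fin (n+1)) = ⟨g+1, hgn⟩ := Fin.ext (by simpa using hk)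
        exact h2 ▸ kNat_rel h1
      rw [cmap_right (Or.inl hi0), cmap_right (Or.inr hj2), Sum.liftRel_inr_inr,
        liftRel_comap_emb2 (by omega) (by omega)]
      simp only [show i.val - (g+1) + g + 1 = g + 1 from by omega,
        show j.val - (g+1) + g + 1 = j.val from by omega, Fin.eta]
      constructor
      · intro h
        rw [hi']
        exact s.trans r0k h
      · intro h
        exact s.trans (s.symm r0k) (by rwa [hi'] at h)
    · -- g < i, j = 0
      have hj' : j = 0 := Fin.ext (by simpa using hj0)
      have hgn : g + 1 < n + 1 := by omega
      have r0k : s.r 0 ⟨g+1, hgn⟩ := by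
        have h1 : kNat n s < n + 1 := by omega
        have h2 : (⟨kNat n s, h1⟩ : Fin (n+1)) = ⟨g+1, hgn⟩ := Fin.ext (by simpa using hk)
        exact h2 ▸ kNat_rel h1
      rw [cmap_right (Or.inr hi2), cmap_right (Or.inl hj0), Sum.liftRel_inr_inr,
        liftRel_comap_emb2 (by omega) (by omega)]
      simp only [show j.val - (g+1) + g + 1 = g + 1 from by omega,
        show i.val - (g+1) + g + 1 = i.val from by omega, Fin.eta]
      constructor
      · intro h
        rw [hj']
        exact s.symm (s.trans r0k (s.symm h))
      · intro h
        exact s.symm (s.trans (s.symm r0k) (s.symm (by rwa [hj'] at h)))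
    · -- both > g
      rw [cmap_right (Or.inr hi2), cmap_right (Or.inr hj2), Sum.liftRel_inr_inr,
        liftRel_comap_emb2 (by omega) (by omega)]
      simp only [show i.val - (g+1) + g + 1 = i.val from by omega,
        show j.val - (g+1) + g + 1 = j.val from by omega, Fin.eta]

/-! ### Counting -/

/-- The fiber of noncrossing setoids with `kNat = g+1` splits as a product. -/
noncomputable def fiberEquiv (hg : g ≤ n) :
    {s : Setoid (Fin (n+1)) // NCS s ∧ kNat n s = g + 1} ≃
      {t : Setoid (Fin g) // NCS t} × {t : Setoid (Fin (n-g)) // NCS t} where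
  toFun x := (⟨Setoid.comap (emb1 hg) x.1, NCS_comap (emb1_strictMono hg) x.2.1⟩,
    ⟨Setoid.comap (emb2 (n := n) (g := g)) x.1, NCS_comap emb2_strictMono x.2.1⟩)
  invFun y := ⟨back y.1.1 y.2.1, back_NCS y.1.2 y.2.2, back_k hg y.1.1 y.2.1⟩
  left_inv x := Subtype.ext (back_comap hg x.2.1 x.2.2)
  right_inv y := by
    obtain ⟨⟨t₁, h₁⟩, ⟨t₂, h₂⟩⟩ := y
    simp only [Prod.mk.injEq, Subtype.mk.injEq]
    exact ⟨comap_emb1_back hg t₁ t₂, comap_emb2_back t₁ t₂⟩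

lemma card_sigma_fin {m : ℕ} (β : Fin m → Type*) [∀ i, Finite (β i)] :
    Nat.card (Σ i, β i) = ∑ i, Nat.card (β i) := by
  letI : ∀ i, Fintype (β i) := fun i => Fintype.ofFinite _
  simp only [Nat.card_eq_fintype_card]
  exact Fintype.card_sigma

lemma card_NCS : ∀ m : ℕ, Nat.card {s : Setoid (Fin m) // NCS s} = catalan m := by
  intro m
  induction m using Nat.strong_induction_on with
  | _ m IH =>
    match m with
    | 0 =>
      have hNC : NCS (⊥ : Setoid (Fin 0)) := by rintro ⟨i, -⟩; exact i.elim0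
      haveI : Unique {s : Setoid (Fin 0) // NCS s} :=
        { default := ⟨⊥, hNC⟩
          uniq := fun x => Subtype.ext (Setoid.ext fun i => i.elim0) }
      simp [Nat.card_unique, catalan_zero]
    | Nat.succ p =>
      -- fiber over the statistic g = kNat - 1
      set fib : {s : Setoid (Fin (p+1)) // NCS s} → Fin (p+1) :=
        fun x => ⟨kNat p x.1 - 1, by have h1 := kNat_pos p x.1; have h2 := kNat_le p x.1; omega⟩
        with hfib
      have e1 : {s : Setoid (Fin (p+1)) // NCS s} ≃ Σ gg : Fin (p+1), {x // fib x = gg} :=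
        (Equiv.sigmaFiberEquiv fib).symm
      rw [Nat.card_congr e1, card_sigma_fin]
      have e2 : ∀ gg : Fin (p+1), {x : {s : Setoid (Fin (p+1)) // NCS s} // fib x = gg} ≃
          {s : Setoid (Fin (p+1)) // NCS s ∧ kNat p s = gg.val + 1} := by
        intro gg
        refine ⟨fun x => ⟨x.1.1, x.1.2, ?_⟩, fun s => ⟨⟨s.1, s.2.1⟩, ?_⟩, fun x => ?_, fun s => ?_⟩
        · have := congrArg Fin.val x.2
          simp only [hfib] at this
          have := kNat_pos p x.1.1
          omega
        · exact Fin.ext (by simp [hfib, s.2.2])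
        · exact Subtype.ext (Subtype.ext rfl)
        · exact Subtype.ext rfl
      have hcard : ∀ gg : Fin (p+1), Nat.card {x // fib x = gg} =
          catalan gg.val * catalan (p - gg.val) := by
        intro gg
        have hg : gg.val ≤ p := by omega
        rw [Nat.card_congr ((e2 gg).trans (fiberEquiv hg)), Nat.card_prod,
          IH gg.val (by omega), IH (p - gg.val) (by omega)]
      rw [Finset.sum_congr rfl fun gg _ => hcard gg]
      exact (catalan_succ p).symm

/-- The number of noncrossing partitions of `{1,…,n}` is the Catalan number `C_n`. -/
theorem stmt6 (n : ℕ) :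
    Nat.card {P : Finpartition (univ : Finset (Fin n)) // IsNoncrossing P} = catalan n := by
  rw [Nat.card_congr (bridge (n := n)), card_NCS]
end

section
/- The Kreweras complementation map K : NC_n → NC_n is an order anti-automorphism of the lattice of noncrossing partitions; in particular, π ≤ σ implies K(σ) ≤ K(π), K is bijective, K(0̂_n) = 1̂_n, and K(1̂_n) = 0̂_n. -/
/-- A symmetric relation on `{1,…,m}` is noncrossing if there are no `i < j < k < l`
with `R i k`, `R j l` and `¬ R i j`. -/
def RelNoncrossing {m : ℕ} (R : Fin m → Fin m → Prop) : Prop :=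
  ¬ ∃ i j k l : Fin m, i < j ∧ j < k ∧ k < l ∧ R i k ∧ R j l ∧ ¬ R i j

/-- A set partition of `{1,…,n}`, viewed as an equivalence relation, is noncrossing. -/
def SetoidNC {n : ℕ} (s : Setoid (Fin n)) : Prop :=
  RelNoncrossing fun i j => s.r i j

/-- `⌊·/2⌋ : {1,…,2n} → {1,…,n}`. -/
def half {n : ℕ} (x : Fin (2 * n)) : Fin n :=
  ⟨x.val / 2, by have := x.isLt; omega⟩

/-- The interweaved union `π ∪̃ σ` of two partitions of `{1,…,n}`, as a relation on the `2n`
interleaved points `1, 1̄, 2, 2̄, …, n, n̄` (even positions carry `π`, odd positions carry `σ`). -/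
def interleaveRel {n : ℕ} (π σ : Setoid (Fin n)) (x y : Fin (2 * n)) : Prop :=
  (x.val % 2 = 0 ∧ y.val % 2 = 0 ∧ π.r (half x) (half y)) ∨
  (x.val % 2 = 1 ∧ y.val % 2 = 1 ∧ σ.r (half x) (half y))

/-- The Kreweras complement of `π`: the coarsest partition `σ` such that the interweaved
union `π ∪̃ σ` is noncrossing. -/
def kreweras {n : ℕ} (π : Setoid (Fin n)) : Setoid (Fin n) :=
  sSup {σ : Setoid (Fin n) | RelNoncrossing (interleaveRel π σ)}

/-! ### Auxiliary development -/

/-- Chords `{a,c}` and `{b,d}` do not cross (linearly): `{a,c}` is not split by the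
interval `(min b d, max b d]`. -/
def ncross {n : ℕ} (a c b d : Fin n) : Prop :=
  ((a ≤ b ↔ c ≤ b) ↔ (a ≤ d ↔ c ≤ d))

/-- Explicit Kreweras complement (gaps sitting to the right of each point). -/
def KE {n : ℕ} (π : Setoid (Fin n)) : Setoid (Fin n) :=
  ⟨fun b d => ∀ a c, π.r a c → ncross a c b d,
   fun _ _ _ _ => Iff.rfl,
   fun h a c hac => (h a c hac).symm,
   fun h1 h2 a c hac => (h1 a c hac).trans (h2 a c hac)⟩

/-- Dual explicit Kreweras complement (gaps sitting to the left of each point). -/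
def KE' {n : ℕ} (π : Setoid (Fin n)) : Setoid (Fin n) :=
  ⟨fun b d => ∀ a c, π.r a c → ncross b d a c,
   fun _ _ _ _ => by unfold ncross; tauto,
   fun h a c hac => by have := h a c hac; unfold ncross at *; tauto,
   fun h1 h2 a c hac => by
     have := h1 a c hac; have := h2 a c hac; unfold ncross at *; tauto⟩

/-- even point -/
def ev {n : ℕ} (a : Fin n) : Fin (2 * n) := ⟨2 * a.val, by have := a.isLt; omega⟩
/-- odd point -/
def od {n : ℕ} (a : Fin n) : Fin (2 * n) := ⟨2 * a.val + 1, by have := a.isLt; omega⟩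

lemma half_ev {n : ℕ} (a : Fin n) : half (ev a) = a := by
  apply Fin.ext; show 2 * a.val / 2 = a.val; omega

lemma half_od {n : ℕ} (a : Fin n) : half (od a) = a := by
  apply Fin.ext; show (2 * a.val + 1) / 2 = a.val; omega

lemma interleave_ev_ev {n : ℕ} (π σ : Setoid (Fin n)) (a c : Fin n) :
    interleaveRel π σ (ev a) (ev c) ↔ π.r a c := by
  constructor
  · rintro (⟨_, _, h⟩ | ⟨h, _, _⟩)
    · rwa [half_ev, half_ev] at h
    · exfalso; revert h; show ¬ (2 * a.val % 2 = 1); omega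
  · intro h
    exact Or.inl ⟨by show 2 * a.val % 2 = 0; omega, by show 2 * c.val % 2 = 0; omega,
      by rwa [half_ev, half_ev]⟩

lemma interleave_od_od {n : ℕ} (π σ : Setoid (Fin n)) (a c : Fin n) :
    interleaveRel π σ (od a) (od c) ↔ σ.r a c := by
  constructor
  · rintro (⟨h, _, _⟩ | ⟨_, _, h⟩)
    · exfalso; revert h; show ¬ ((2 * a.val + 1) % 2 = 0); omega
    · rwa [half_od, half_od] at h
  · intro h
    exact Or.inr ⟨by show (2 * a.val + 1) % 2 = 1; omega,
      by show (2 * c.val + 1) % 2 = 1; omega, by rwa [half_od, half_od]⟩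

lemma interleave_ev_od {n : ℕ} (π σ : Setoid (Fin n)) (a c : Fin n) :
    ¬ interleaveRel π σ (ev a) (od c) := by
  rintro (⟨_, h, _⟩ | ⟨h, _, _⟩)
  · revert h; show ¬ ((2 * c.val + 1) % 2 = 0); omega
  · revert h; show ¬ (2 * a.val % 2 = 1); omega

lemma interleave_od_ev {n : ℕ} (π σ : Setoid (Fin n)) (a c : Fin n) :
    ¬ interleaveRel π σ (od a) (ev c) := by
  rintro (⟨h, _, _⟩ | ⟨_, h, _⟩)
  · revert h; show ¬ ((2 * a.val + 1) % 2 = 0); omega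
  · revert h; show ¬ (2 * c.val % 2 = 1); omega

/-- Build a crossing in the interleave from a mixed crossing pattern, type 1. -/
lemma build1 {n : ℕ} {π σ : Setoid (Fin n)} {X Y B D : Fin n}
    (hπ : π.r X Y) (hσ : σ.r B D) (h1 : X ≤ B) (h2 : B < Y) (h3 : Y ≤ D) :
    ¬ RelNoncrossing (interleaveRel π σ) := by
  intro h
  exact h ⟨ev X, od B, ev Y, od D,
    by show 2 * X.val < 2 * B.val + 1; omega,
    by show 2 * B.val + 1 < 2 * Y.val; omega,
    by show 2 * Y.val < 2 * D.val + 1; omega,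
    (interleave_ev_ev π σ X Y).mpr hπ,
    (interleave_od_od π σ B D).mpr hσ,
    interleave_ev_od π σ X B⟩

/-- Build a crossing in the interleave from a mixed crossing pattern, type 2. -/
lemma build2 {n : ℕ} {π σ : Setoid (Fin n)} {X Y B D : Fin n}
    (hπ : π.r X Y) (hσ : σ.r B D) (h1 : B < X) (h2 : X ≤ D) (h3 : D < Y) :
    ¬ RelNoncrossing (interleaveRel π σ) := by
  intro h
  exact h ⟨od B, ev X, od D, ev Y,
    by show 2 * B.val + 1 < 2 * X.val; omega,
    by show 2 * X.val < 2 * D.val + 1; omega,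
    by show 2 * D.val + 1 < 2 * Y.val; omega,
    (interleave_od_od π σ B D).mpr hσ,
    (interleave_ev_ev π σ X Y).mpr hπ,
    interleave_od_ev π σ B X⟩

lemma cross_cases {n : ℕ} {a c b d : Fin n} (h : ¬ ncross a c b d) :
    (a ≤ b ∧ b < c ∧ c ≤ d) ∨ (b < a ∧ a ≤ d ∧ d < c) ∨
    (c ≤ b ∧ b < a ∧ a ≤ d) ∨ (b < c ∧ c ≤ d ∧ d < a) ∨
    (a ≤ d ∧ d < c ∧ c ≤ b) ∨ (d < a ∧ a ≤ b ∧ b < c) ∨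
    (c ≤ d ∧ d < a ∧ a ≤ b) ∨ (d < c ∧ c ≤ b ∧ b < a) := by
  unfold ncross at h; omega

/-- Noncrossing interleave forces `π` noncrossing. -/
lemma nc_pi_of_interleave {n : ℕ} {π σ : Setoid (Fin n)}
    (h : RelNoncrossing (interleaveRel π σ)) : SetoidNC π := by
  rintro ⟨a, b, c, d, hab, hbc, hcd, r1, r2, r3⟩
  exact h ⟨ev a, ev b, ev c, ev d,
    by show 2 * a.val < 2 * b.val; omega,
    by show 2 * b.val < 2 * c.val; omega,
    by show 2 * c.val < 2 * d.val; omega,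
    (interleave_ev_ev π σ a c).mpr r1,
    (interleave_ev_ev π σ b d).mpr r2,
    fun hc => r3 ((interleave_ev_ev π σ a b).mp hc)⟩

/-- Noncrossing interleave forces `σ` noncrossing. -/
lemma nc_sigma_of_interleave {n : ℕ} {π σ : Setoid (Fin n)}
    (h : RelNoncrossing (interleaveRel π σ)) : SetoidNC σ := by
  rintro ⟨a, b, c, d, hab, hbc, hcd, r1, r2, r3⟩
  exact h ⟨od a, od b, od c, od d,
    by show 2 * a.val + 1 < 2 * b.val + 1; omega,
    by show 2 * b.val + 1 < 2 * c.val + 1; omega,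
    by show 2 * c.val + 1 < 2 * d.val + 1; omega,
    (interleave_od_od π σ a c).mpr r1,
    (interleave_od_od π σ b d).mpr r2,
    fun hc => r3 ((interleave_od_od π σ a b).mp hc)⟩

/-- Noncrossing interleave forces `σ ≤ KE π`. -/
lemma le_KE_of_interleave {n : ℕ} {π σ : Setoid (Fin n)}
    (h : RelNoncrossing (interleaveRel π σ)) : σ ≤ KE π := by
  rw [Setoid.le_def]
  intro b d hbd
  intro a c hac
  by_contra hnc
  have hac' := π.symm' hac
  have hbd' := σ.symm' hbd
  rcases cross_cases hnc with ⟨h1, h2, h3⟩ | ⟨h1, h2, h3⟩ | ⟨h1, h2, h3⟩ | ⟨h1, h2, h3⟩ |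
    ⟨h1, h2, h3⟩ | ⟨h1, h2, h3⟩ | ⟨h1, h2, h3⟩ | ⟨h1, h2, h3⟩
  · exact build1 hac hbd h1 h2 h3 h
  · exact build2 hac hbd h1 h2 h3 h
  · exact build1 hac' hbd h1 h2 h3 h
  · exact build2 hac' hbd h1 h2 h3 h
  · exact build1 hac hbd' h1 h2 h3 h
  · exact build2 hac hbd' h1 h2 h3 h
  · exact build1 hac' hbd' h1 h2 h3 h
  · exact build2 hac' hbd' h1 h2 h3 h

/-- Backward direction of the characterization. -/
lemma interleave_of {n : ℕ} {π σ : Setoid (Fin n)}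
    (hπ : SetoidNC π) (hσ : SetoidNC σ) (hle : σ ≤ KE π) :
    RelNoncrossing (interleaveRel π σ) := by
  rintro ⟨i, j, k, l, hij, hjk, hkl, rik, rjl, nij⟩
  have vi : (half i).val = i.val / 2 := rfl
  have vj : (half j).val = j.val / 2 := rfl
  have vk : (half k).val = k.val / 2 := rfl
  have vl : (half l).val = l.val / 2 := rfl
  rcases rik with ⟨pi0, pk0, hik⟩ | ⟨pi1, pk1, hik⟩ <;>
    rcases rjl with ⟨pj0, pl0, hjl⟩ | ⟨pj1, pl1, hjl⟩
  · -- all even : crossing of π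
    refine hπ ⟨half i, half j, half k, half l, by omega, by omega, by omega, hik, hjl, ?_⟩
    intro hc; exact nij (Or.inl ⟨pi0, pj0, hc⟩)
  · -- i,k even; j,l odd : mixed
    have hn := (Setoid.le_def.mp hle hjl) (half i) (half k) hik
    unfold ncross at hn
    omega
  · -- i,k odd; j,l even : mixed
    have hn := (Setoid.le_def.mp hle hik) (half j) (half l) hjl
    unfold ncross at hn
    omega
  · -- all odd : crossing of σ
    refine hσ ⟨half i, half j, half k, half l, by omega, by omega, by omega, hik, hjl, ?_⟩
    intro hc; exact nij (Or.inr ⟨pi1, pj1, hc⟩)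

/-- `KE π` is always noncrossing. -/
lemma KE_nc {n : ℕ} (π : Setoid (Fin n)) : SetoidNC (KE π) := by
  rintro ⟨b1, b2, b3, b4, h12, h23, h34, r13, r24, n12⟩
  have n12' : ∃ a c, π.r a c ∧ ¬ ncross a c b1 b2 := by
    by_contra hc
    push_neg at hc
    exact n12 fun a c hac => hc a c hac
  obtain ⟨a, c, hac, hn⟩ := n12'
  have t13 := r13 a c hac
  have t24 := r24 a c hac
  unfold ncross at t13 t24 hn
  omega

/-- `KE' π` is always noncrossing. -/
lemma KE'_nc {n : ℕ} (π : Setoid (Fin n)) : SetoidNC (KE' π) := by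
  rintro ⟨b1, b2, b3, b4, h12, h23, h34, r13, r24, n12⟩
  have n12' : ∃ a c, π.r a c ∧ ¬ ncross b1 b2 a c := by
    by_contra hc
    push_neg at hc
    exact n12 fun a c hac => hc a c hac
  obtain ⟨a, c, hac, hn⟩ := n12'
  have t13 := r13 a c hac
  have t24 := r24 a c hac
  unfold ncross at t13 t24 hn
  omega

lemma kreweras_eq' {n : ℕ} {π : Setoid (Fin n)} (hπ : SetoidNC π) :
    kreweras π = KE π := by
  apply le_antisymm
  · exact sSup_le fun σ hσ => le_KE_of_interleave hσ
  · exact le_sSup (interleave_of hπ (KE_nc π) (le_refl _))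

lemma exists_min_rel {n : ℕ} (s : Setoid (Fin n)) (t : Fin n) :
    ∃ f, s.r f t ∧ ∀ x, s.r x t → f ≤ x := by
  classical
  obtain ⟨f, hf, hmin⟩ := Finset.exists_min_image
    (Finset.univ.filter fun x => s.r x t) id
    ⟨t, Finset.mem_filter.mpr ⟨Finset.mem_univ t, s.refl' t⟩⟩
  exact ⟨f, (Finset.mem_filter.mp hf).2,
    fun x hx => hmin x (Finset.mem_filter.mpr ⟨Finset.mem_univ x, hx⟩)⟩

lemma exists_max_rel {n : ℕ} (s : Setoid (Fin n)) (t : Fin n) :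
    ∃ g, s.r g t ∧ ∀ x, s.r x t → x ≤ g := by
  classical
  obtain ⟨g, hg, hmax⟩ := Finset.exists_max_image
    (Finset.univ.filter fun x => s.r x t) id
    ⟨t, Finset.mem_filter.mpr ⟨Finset.mem_univ t, s.refl' t⟩⟩
  exact ⟨g, (Finset.mem_filter.mp hg).2,
    fun x hx => hmax x (Finset.mem_filter.mpr ⟨Finset.mem_univ x, hx⟩)⟩

/-- The span `[min B, max B]` of a block of a noncrossing partition is saturated. -/
lemma block_span {n : ℕ} {π : Setoid (Fin n)} (hnc : SetoidNC π) {t f g : Fin n}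
    (hf : π.r f t) (hg : π.r g t)
    (hmin : ∀ x, π.r x t → f ≤ x) (hmax : ∀ x, π.r x t → x ≤ g) :
    ∀ p q, π.r p q → ((f ≤ p ∧ p ≤ g) ↔ (f ≤ q ∧ q ≤ g)) := by
  suffices H : ∀ p q, π.r p q → (f ≤ p ∧ p ≤ g) → (f ≤ q ∧ q ≤ g) by
    intro p q hpq
    exact ⟨H p q hpq, H q p (π.symm' hpq)⟩
  rintro p q hpq ⟨hfp, hpg⟩
  by_cases hpt : π.r p t
  · have hqt : π.r q t := π.trans' (π.symm' hpq) hpt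
    exact ⟨hmin q hqt, hmax q hqt⟩
  · have hfp' : f < p := lt_of_le_of_ne hfp (fun h => hpt (h ▸ hf))
    have hpg' : p < g := lt_of_le_of_ne hpg (fun h => hpt (h ▸ hg))
    have hfg : π.r f g := π.trans' hf (π.symm' hg)
    by_contra hq
    rcases (not_and_or.mp hq) with hq1 | hq2
    · -- q < f
      have hqf : q < f := lt_of_not_ge hq1
      refine hnc ⟨q, f, p, g, hqf, hfp', hpg', π.symm' hpq, hfg, ?_⟩
      intro hcon
      exact absurd (hmin q (π.trans' hcon hf)) (not_le.mpr hqf)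
    · -- g < q
      have hgq : g < q := lt_of_not_ge hq2
      refine hnc ⟨f, p, g, q, hfp', hpg', hgq, hfg, hpq, ?_⟩
      intro hcon
      exact hpt (π.trans' (π.symm' hcon) hf)

/-- Hard direction 1: compatibility with all of `KE π` (in the dual sense) forces `b ~ d`. -/
lemma rel_of_ncross1 {n : ℕ} {π : Setoid (Fin n)} (hπ : SetoidNC π) {b d : Fin n}
    (hbd : b < d) (h : ∀ x y, (KE π).r x y → ncross b d x y) : π.r b d := by
  obtain ⟨fD, hfD, hfDmin⟩ := exists_min_rel π d
  obtain ⟨gD, hgD, hgDmax⟩ := exists_max_rel π d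
  obtain ⟨fB, hfB, hfBmin⟩ := exists_min_rel π b
  obtain ⟨gB, hgB, hgBmax⟩ := exists_max_rel π b
  have spanD := block_span hπ hfD hgD hfDmin hgDmax
  have spanB := block_span hπ hfB hgB hfBmin hgBmax
  have hfDd : fD ≤ d := hfDmin d (π.refl' d)
  have hdgD : d ≤ gD := hgDmax d (π.refl' d)
  have hfBb : fB ≤ b := hfBmin b (π.refl' b)
  have hbgB : b ≤ gB := hgBmax b (π.refl' b)
  -- Step 1 : fD ≤ b
  have step1 : fD ≤ b := by
    by_contra hc
    push_neg at hc   -- b < fD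
    have hx1 : 1 ≤ fD.val := by omega
    set x : Fin n := ⟨fD.val - 1, by have := fD.isLt; omega⟩ with hxdef
    have hxv : x.val = fD.val - 1 := rfl
    have hrel : (KE π).r x gD := by
      intro p q hpq
      have hs := spanD p q hpq
      unfold ncross
      omega
    have hcon := h x gD hrel
    unfold ncross at hcon
    omega
  -- Step 2 : d ≤ gB
  have step2 : d ≤ gB := by
    by_contra hc
    push_neg at hc   -- gB < d
    by_cases hf0 : fB.val = 0
    · -- use the pair (gB, n-1)
      set y : Fin n := ⟨n - 1, by have := b.isLt; omega⟩ with hydef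
      have hyv : y.val = n - 1 := rfl
      have hrel : (KE π).r gB y := by
        intro p q hpq
        have hs := spanB p q hpq
        have hp := p.isLt
        have hq := q.isLt
        unfold ncross
        omega
      have hcon := h gB y hrel
      have hd := d.isLt
      unfold ncross at hcon
      omega
    · set x : Fin n := ⟨fB.val - 1, by have := fB.isLt; omega⟩ with hxdef
      have hxv : x.val = fB.val - 1 := rfl
      have hrel : (KE π).r x gB := by
        intro p q hpq
        have hs := spanB p q hpq
        unfold ncross
        omega
      have hcon := h x gB hrel
      unfold ncross at hcon
      omega
  -- Step 3
  by_cases h1 : fD = b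
  · exact h1 ▸ hfD
  by_cases h2 : gB = d
  · exact π.symm' (h2 ▸ hgB)
  have hfDb : fD < b := lt_of_le_of_ne step1 h1
  have hdgB : d < gB := lt_of_le_of_ne step2 (fun hh => h2 hh.symm)
  have hfb : π.r fD b := by
    by_contra hn
    exact hπ ⟨fD, b, d, gB, hfDb, hbd, hdgB, hfD, π.symm' hgB, hn⟩
  exact π.trans' (π.symm' hfb) hfD

/-- Hard direction 2: dual version with `KE'`. -/
lemma rel_of_ncross2 {n : ℕ} {π : Setoid (Fin n)} (hπ : SetoidNC π) {b d : Fin n}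
    (hbd : b < d) (h : ∀ x y, (KE' π).r x y → ncross x y b d) : π.r b d := by
  obtain ⟨fD, hfD, hfDmin⟩ := exists_min_rel π d
  obtain ⟨gD, hgD, hgDmax⟩ := exists_max_rel π d
  obtain ⟨fB, hfB, hfBmin⟩ := exists_min_rel π b
  obtain ⟨gB, hgB, hgBmax⟩ := exists_max_rel π b
  have spanD := block_span hπ hfD hgD hfDmin hgDmax
  have spanB := block_span hπ hfB hgB hfBmin hgBmax
  have hfDd : fD ≤ d := hfDmin d (π.refl' d)
  have hdgD : d ≤ gD := hgDmax d (π.refl' d)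
  have hfBb : fB ≤ b := hfBmin b (π.refl' b)
  have hbgB : b ≤ gB := hgBmax b (π.refl' b)
  -- Step 1 : d ≤ gB
  have step1 : d ≤ gB := by
    by_contra hc
    push_neg at hc   -- gB < d
    set y : Fin n := ⟨gB.val + 1, by have := d.isLt; omega⟩ with hydef
    have hyv : y.val = gB.val + 1 := rfl
    have hrel : (KE' π).r fB y := by
      intro p q hpq
      have hs := spanB p q hpq
      unfold ncross
      omega
    have hcon := h fB y hrel
    unfold ncross at hcon
    omega
  -- Step 2 : fD ≤ b
  have step2 : fD ≤ b := by
    by_contra hc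
    push_neg at hc   -- b < fD
    by_cases hgtop : gD.val + 1 < n
    · set y : Fin n := ⟨gD.val + 1, hgtop⟩ with hydef
      have hyv : y.val = gD.val + 1 := rfl
      have hrel : (KE' π).r fD y := by
        intro p q hpq
        have hs := spanD p q hpq
        unfold ncross
        omega
      have hcon := h fD y hrel
      unfold ncross at hcon
      omega
    · -- gD = n - 1, use the pair (0, fD)
      set x : Fin n := ⟨0, by have := b.isLt; omega⟩ with hxdef
      have hxv : x.val = 0 := rfl
      have hrel : (KE' π).r x fD := by
        intro p q hpq
        have hs := spanD p q hpq
        have hp := p.isLt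
        have hq := q.isLt
        have hg := gD.isLt
        unfold ncross
        omega
      have hcon := h x fD hrel
      unfold ncross at hcon
      omega
  -- Step 3
  by_cases h1 : fD = b
  · exact h1 ▸ hfD
  by_cases h2 : gB = d
  · exact π.symm' (h2 ▸ hgB)
  have hfDb : fD < b := lt_of_le_of_ne step2 h1
  have hdgB : d < gB := lt_of_le_of_ne step1 (fun hh => h2 hh.symm)
  have hfb : π.r fD b := by
    by_contra hn
    exact hπ ⟨fD, b, d, gB, hfDb, hbd, hdgB, hfD, π.symm' hgB, hn⟩
  exact π.trans' (π.symm' hfb) hfD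

lemma KE'_KE {n : ℕ} {π : Setoid (Fin n)} (hπ : SetoidNC π) : KE' (KE π) = π := by
  apply Setoid.ext
  intro b d
  constructor
  · intro h
    rcases lt_trichotomy b d with hbd | hbd | hbd
    · exact rel_of_ncross1 hπ hbd (fun x y hxy => h x y hxy)
    · exact hbd ▸ π.refl' b
    · exact π.symm' (rel_of_ncross1 hπ hbd (fun x y hxy => (KE' (KE π)).symm' h x y hxy))
  · intro hbd a c hac
    exact hac b d hbd

lemma KE_KE' {n : ℕ} {π : Setoid (Fin n)} (hπ : SetoidNC π) : KE (KE' π) = π := by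
  apply Setoid.ext
  intro b d
  constructor
  · intro h
    rcases lt_trichotomy b d with hbd | hbd | hbd
    · exact rel_of_ncross2 hπ hbd (fun x y hxy => h x y hxy)
    · exact hbd ▸ π.refl' b
    · exact π.symm' (rel_of_ncross2 hπ hbd (fun x y hxy => (KE (KE' π)).symm' h x y hxy))
  · intro hbd a c hac
    exact hac b d hbd

lemma KE_anti {n : ℕ} {π σ : Setoid (Fin n)} (h : π ≤ σ) : KE σ ≤ KE π := by
  rw [Setoid.le_def]
  intro x y hxy a c hac
  exact hxy a c (Setoid.le_def.mp h hac)

lemma nc_bot {n : ℕ} : SetoidNC (⊥ : Setoid (Fin n)) := by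
  rintro ⟨i, j, k, l, hij, hjk, hkl, rik, _, _⟩
  have : i = k := rik
  subst this
  exact absurd (hij.trans hjk) (lt_irrefl i)

lemma nc_top {n : ℕ} : SetoidNC (⊤ : Setoid (Fin n)) := by
  rintro ⟨i, j, k, l, _, _, _, _, _, rij⟩
  exact rij trivial

/-- The Kreweras complementation map is an order anti-automorphism of `NC_n`:
it is order-reversing, a bijection of `NC_n` onto itself, and maps `0̂_n` to `1̂_n`
and `1̂_n` to `0̂_n`. -/
theorem stmt7 (n : ℕ) :
    (∀ π σ : Setoid (Fin n), SetoidNC π → SetoidNC σ → π ≤ σ →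
        kreweras σ ≤ kreweras π) ∧
    Set.BijOn (kreweras (n := n)) {π | SetoidNC π} {π | SetoidNC π} ∧
    kreweras (⊥ : Setoid (Fin n)) = ⊤ ∧
    kreweras (⊤ : Setoid (Fin n)) = ⊥ := by
  refine ⟨?_, ⟨?_, ?_, ?_⟩, ?_, ?_⟩
  · intro π σ hπ hσ hle
    rw [kreweras_eq' hπ, kreweras_eq' hσ]
    exact KE_anti hle
  · -- MapsTo
    intro π hπ
    show SetoidNC (kreweras π)
    rw [kreweras_eq' hπ]
    exact KE_nc π
  · -- InjOn
    intro π hπ σ hσ heq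
    have hKE : KE π = KE σ := by
      rw [← kreweras_eq' hπ, ← kreweras_eq' hσ]; exact heq
    calc π = KE' (KE π) := (KE'_KE hπ).symm
      _ = KE' (KE σ) := by rw [hKE]
      _ = σ := KE'_KE hσ
  · -- SurjOn
    intro τ hτ
    refine ⟨KE' τ, KE'_nc τ, ?_⟩
    show kreweras (KE' τ) = τ
    rw [kreweras_eq' (KE'_nc τ)]
    exact KE_KE' hτ
  · -- bottom
    rw [kreweras_eq' nc_bot]
    apply le_antisymm le_top
    rw [Setoid.le_def]
    intro x y _
    intro a c hac
    have hrel : a = c := hac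
    subst hrel
    unfold ncross
    tauto
  · -- top
    rw [kreweras_eq' nc_top]
    apply le_antisymm ?_ bot_le
    rw [Setoid.le_def]
    intro x y hxy
    have hc := hxy x y trivial
    show x = y
    unfold ncross at hc
    omega
end

section
/- Let π be a set partition of {1,...,n} with cn(π) = #{k : 1 ≤ k ≤ n-1, k ~_π k+1} > 0, and pick k with k ~_π k+1. Let π̂ = π/[k = k+1] ∈ Π_{n-1} be the partition obtained by merging positions k and k+1, and let ν be the partition of {1,...,n} whose only non-singleton block is {k, k+1}. Then every partition ρ of {1,...,n} with ρ ∨ ν = π and ρ < π satisfies cn(ρ) ≤ cn(π) - 1, and cn(π̂) = cn(π) - 1. -/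
open scoped Classical

/-- The number of connected neighbours of a partition of `{1,…,m+1}`: the number of
adjacent pairs `k, k+1` lying in the same block. -/
noncomputable def cn {m : ℕ} (s : Setoid (Fin (m + 1))) : ℕ :=
  (Finset.univ.filter fun j : Fin m => s.r j.castSucc j.succ).card

/-- Splitting a connected pair of neighbours: if `k ∼_π k+1`, then every `ρ` with
`ρ ∨ ν = π` and `ρ < π` (where `ν` is the partition generated by identifying `k` and `k+1`)
satisfies `cn(ρ) ≤ cn(π) − 1`; and the quotient `π̂ = π/[k = k+1] ∈ Π_{n-1}` satisfies
`cn(π̂) = cn(π) − 1`. -/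
theorem stmt17 (n : ℕ) (π : Setoid (Fin (n + 2))) (k : Fin (n + 1))
    (hk : π.r k.castSucc k.succ) :
    (∀ ρ : Setoid (Fin (n + 2)),
      ρ ⊔ sInf {s : Setoid (Fin (n + 2)) | s.r k.castSucc k.succ} = π → ρ < π →
        cn ρ ≤ cn π - 1) ∧
    cn (Setoid.comap
        (fun a : Fin (n + 1) => if a ≤ k then a.castSucc else a.succ) π) = cn π - 1 := by
  have hkmem : k ∈ Finset.univ.filter fun j : Fin (n+1) => π.r j.castSucc j.succ := by
    simp [hk]
  have rel_congr : ∀ a b c d : Fin (n+2), a = c → b = d → (π.r a b ↔ π.r c d) := by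
    rintro a b _ _ rfl rfl; rfl
  constructor
  · intro ρ hsup hlt
    have hle : ρ ≤ π := by rw [← hsup]; exact le_sup_left
    have hnrel : ¬ ρ.r k.castSucc k.succ := by
      intro h
      have : sInf {s : Setoid (Fin (n + 2)) | s.r k.castSucc k.succ} ≤ ρ := sInf_le h
      have : ρ = π := by rw [← hsup, sup_eq_left.mpr this]
      exact absurd this (ne_of_lt hlt)
    have hsub : (Finset.univ.filter fun j : Fin (n+1) => ρ.r j.castSucc j.succ) ⊆
        (Finset.univ.filter fun j : Fin (n+1) => π.r j.castSucc j.succ).erase k := by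
      intro j hj
      simp only [Finset.mem_filter, Finset.mem_univ, true_and] at hj
      refine Finset.mem_erase.2 ⟨?_, by simpa using hle hj⟩
      rintro rfl; exact hnrel hj
    calc cn ρ ≤ _ := Finset.card_le_card hsub
      _ = cn π - 1 := by rw [Finset.card_erase_of_mem hkmem]; rfl
  · have key : ∀ j : Fin n,
        (Setoid.comap (fun a : Fin (n + 1) => if a ≤ k then a.castSucc else a.succ) π).r
          j.castSucc j.succ ↔ π.r (k.succAbove j).castSucc (k.succAbove j).succ := by
      intro j
      show π.r _ _ ↔ _
      rcases lt_trichotomy (j:ℕ) (k:ℕ) with h | h | h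
      · apply rel_congr <;>
        · simp only [Fin.succAbove, Fin.ext_iff]
          split_ifs <;> simp_all [Fin.lt_def, Fin.le_def, Fin.ext_iff] <;> omega
      · have hc : ((j.castSucc : Fin (n+1)) ≤ k) := by simp [Fin.le_def, h]
        have hs : ¬ ((j.succ : Fin (n+1)) ≤ k) := by simp [Fin.le_def, h]
        beta_reduce
        rw [if_pos hc, if_neg hs]
        have e1 : ((j.castSucc : Fin (n+1)).castSucc : Fin (n+2)) = k.castSucc := by
          simp [Fin.ext_iff, h]
        have e2 : ((k.succAbove j).castSucc : Fin (n+2)) = k.succ := by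
          simp [Fin.succAbove, Fin.ext_iff, Fin.lt_def, h]
        have e3 : ((k.succAbove j).succ : Fin (n+2)) = (j.succ : Fin (n+1)).succ := by
          simp [Fin.succAbove, Fin.ext_iff, Fin.lt_def, h]
        rw [e1, e2, e3]
        exact ⟨fun hr => π.iseqv.trans (π.iseqv.symm hk) hr, fun hr => π.iseqv.trans hk hr⟩
      · apply rel_congr <;>
        · simp only [Fin.succAbove, Fin.ext_iff]
          split_ifs <;> simp_all [Fin.lt_def, Fin.le_def, Fin.ext_iff] <;> omega
    have hcn : cn π - 1 =
        ((Finset.univ.filter fun j : Fin (n+1) => π.r j.castSucc j.succ).erase k).card := by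
      rw [Finset.card_erase_of_mem hkmem]; rfl
    rw [hcn]
    unfold cn
    apply Finset.card_bij (fun j _ => k.succAbove j)
    · intro a ha
      simp only [Finset.mem_filter, Finset.mem_univ, true_and] at ha
      exact Finset.mem_erase.2 ⟨Fin.succAbove_ne k a, by
        simp only [Finset.mem_filter, Finset.mem_univ, true_and]
        exact (key a).mp ha⟩
    · intro a _ b _ hab
      exact Fin.succAbove_right_injective hab
    · intro b hb
      obtain ⟨a, rfl⟩ := Fin.exists_succAbove_eq (Finset.ne_of_mem_erase hb)
      refine ⟨a, ?_, rfl⟩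
      simp only [Finset.mem_filter, Finset.mem_univ, true_and]
      apply (key a).mpr
      simpa using (Finset.mem_of_mem_erase hb)
end

section
/- In a *-probability space (U, φ) with an exchangeability structure, the sesquilinear form ⟨X, Y⟩ = φ(Y^{(1)*} X^{(2)}) on A is positive semidefinite; consequently the Cauchy–Schwarz inequality |φ(Y^{(1)*} X^{(2)})|² ≤ φ(X^{(1)*} X^{(2)}) · φ(Y^{(1)*} Y^{(2)}) holds for all X, Y ∈ A. -/
/-- In an exchangeability system for a `*`-probability space `(A, φ)` — embeddings
`ι_k : A → U` into a `*`-probability space `(U, φ̃)` with permutation-invariant mixed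
moments — the sesquilinear form `⟨X, Y⟩ = φ̃(Y^{(1)*} X^{(2)})` is positive semidefinite,
and consequently the Cauchy–Schwarz inequality
`|φ̃(Y^{(1)*} X^{(2)})|² ≤ φ̃(X^{(1)*} X^{(2)}) · φ̃(Y^{(1)*} Y^{(2)})` holds. -/
theorem stmt18
    (A U : Type*) [Ring A] [Algebra ℂ A] [StarRing A] [StarModule ℂ A]
    [Ring U] [Algebra ℂ U] [StarRing U] [StarModule ℂ U]
    (φ : U →ₗ[ℂ] ℂ)
    (hpos : ∀ u : U, 0 ≤ (φ (star u * u)).re ∧ (φ (star u * u)).im = 0)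
    (ι : ℕ → A →⋆ₐ[ℂ] U)
    (hexch : ∀ (m : ℕ) (X : Fin m → A) (h : Fin m → ℕ) (σ : Equiv.Perm ℕ),
      φ (List.ofFn fun i => ι (h i) (X i)).prod =
        φ (List.ofFn fun i => ι (σ (h i)) (X i)).prod) :
    (∀ X : A,
      0 ≤ (φ (star (ι 0 X) * ι 1 X)).re ∧ (φ (star (ι 0 X) * ι 1 X)).im = 0) ∧
    (∀ X Y : A,
      ‖φ (star (ι 0 Y) * ι 1 X)‖ ^ 2 ≤
        (φ (star (ι 0 X) * ι 1 X)).re * (φ (star (ι 0 Y) * ι 1 Y)).re) := by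
  -- Polarization: `φ(v* u) = conj φ(u* v)`, from positivity of `φ` alone.
  have polar : ∀ u v : U, φ (star v * u) = (starRingEnd ℂ) (φ (star u * v)) := by
    intro u v
    have e1 : star (u + v) * (u + v)
        = star u * u + star u * v + star v * u + star v * v := by
      rw [star_add]; noncomm_ring
    have e2 : star (u + Complex.I • v) * (u + Complex.I • v)
        = star u * u + Complex.I • (star u * v) + (-Complex.I) • (star v * u)
          + star v * v := by
      rw [star_add, star_smul]
      simp only [Complex.star_def, Complex.conj_I, add_mul, mul_add, smul_mul_assoc,
        mul_smul_comm, smul_smul, smul_add, neg_mul, neg_smul, Complex.I_mul_I, neg_neg,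
        one_smul]
      match_scalars <;> simp [Complex.I_sq]
    have h1 := (hpos (u + v)).2
    have h2 := (hpos (u + Complex.I • v)).2
    have hu := (hpos u).2
    have hv := (hpos v).2
    rw [e1] at h1
    rw [e2] at h2
    simp only [map_add, map_smul, Complex.add_im, Complex.smul_im, smul_eq_mul,
      Complex.mul_im, Complex.I_re, Complex.I_im, Complex.neg_im, Complex.neg_re] at h1 h2
    apply Complex.ext
    · simp only [Complex.conj_re]; nlinarith [h2]
    · simp only [Complex.conj_im]; nlinarith [h1]
  -- Exchangeability for pairs.
  have pair : ∀ (x y : A) (i j : ℕ) (σ : Equiv.Perm ℕ),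
      φ (ι i x * ι j y) = φ (ι (σ i) x * ι (σ j) y) := by
    intro x y i j σ
    simpa [List.ofFn_succ] using hexch 2 ![x, y] ![i, j] σ
  have off : ∀ (x y : A) (i j : ℕ), i ≠ j → φ (ι i x * ι j y) = φ (ι 0 x * ι 1 y) := by
    intro x y i j hij
    have hj0 : Equiv.swap i 0 j ≠ 0 := by
      rcases eq_or_ne j 0 with rfl | hj
      · simpa [Equiv.swap_apply_right] using hij
      · rwa [Equiv.swap_apply_of_ne_of_ne (Ne.symm hij) hj]
    have h := pair x y i j ((Equiv.swap i 0).trans (Equiv.swap (Equiv.swap i 0 j) 1))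
    rw [h]
    congr 2
    · simp [Equiv.swap_apply_left, Equiv.swap_apply_of_ne_of_ne (Ne.symm hj0) one_ne_zero.symm]
    · simp [Equiv.swap_apply_left]
  have diag : ∀ (x y : A) (i : ℕ), φ (ι i x * ι i y) = φ (ι 0 x * ι 0 y) := by
    intro x y i
    have h := pair x y i i (Equiv.swap i 0)
    rw [h]
    simp [Equiv.swap_apply_left]
  -- Positive semidefiniteness, by the averaging argument.
  have psd : ∀ X : A,
      0 ≤ (φ (star (ι 0 X) * ι 1 X)).re ∧ (φ (star (ι 0 X) * ι 1 X)).im = 0 := by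
    intro X
    set a := φ (ι 0 (star X) * ι 0 X) with ha_def
    set b := φ (ι 0 (star X) * ι 1 X) with hb_def
    have hb_goal : φ (star (ι 0 X) * ι 1 X) = b := by rw [hb_def, map_star]
    have ha := hpos (ι 0 X)
    rw [← map_star, ← ha_def] at ha
    have key : ∀ N : ℕ, φ (star (∑ j ∈ Finset.range N, ι j X) * ∑ j ∈ Finset.range N, ι j X)
        = N • (a + (N - 1) • b) := by
      intro N
      have hstar : star (∑ j ∈ Finset.range N, ι j X)
          = ∑ j ∈ Finset.range N, ι j (star X) := by
        rw [star_sum]; exact Finset.sum_congr rfl fun j _ => (map_star (ι j) X).symm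
      rw [hstar, Finset.sum_mul_sum, map_sum]
      have inner_sum : ∀ i ∈ Finset.range N,
          φ (∑ j ∈ Finset.range N, ι i (star X) * ι j X) = a + (N - 1) • b := by
        intro i hi
        rw [map_sum, ← Finset.add_sum_erase _ _ hi, diag]
        congr 1
        rw [Finset.sum_congr rfl fun j hj => off (star X) X i j
          (Ne.symm (Finset.ne_of_mem_erase hj)), Finset.sum_const,
          Finset.card_erase_of_mem hi, Finset.card_range]
      rw [Finset.sum_congr rfl inner_sum, Finset.sum_const, Finset.card_range]
    have hre : ∀ n : ℕ, 0 ≤ a.re + n * b.re := by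
      intro n
      have h := (hpos (∑ j ∈ Finset.range (n + 1), ι j X)).1
      rw [key (n + 1)] at h
      have he : ((n + 1 : ℕ) • (a + (n + 1 - 1) • b)).re = (n + 1) * (a.re + n * b.re) := by
        simp [nsmul_eq_mul, Complex.add_re, Complex.mul_re]; ring
      rw [he] at h
      have hn : (0:ℝ) < n + 1 := by positivity
      nlinarith
    have him : b.im = 0 := by
      have h := (hpos (∑ j ∈ Finset.range 2, ι j X)).2
      rw [key 2] at h
      have he : ((2 : ℕ) • (a + (2 - 1 : ℕ) • b)).im = 2 * (a.im + b.im) := by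
        simp [nsmul_eq_mul, Complex.add_im, Complex.mul_im]; ring
      rw [he] at h
      have := ha.2
      linarith
    have hbre : 0 ≤ b.re := by
      by_contra hneg
      push_neg at hneg
      set t := -b.re with ht
      have ht0 : 0 < t := by simp [ht]; linarith
      obtain ⟨n, hn⟩ := exists_nat_gt (a.re / t)
      have := hre n
      rw [div_lt_iff₀ ht0] at hn
      nlinarith
    rw [hb_goal]
    exact ⟨hbre, him⟩
  refine ⟨psd, fun X Y => ?_⟩
  -- Build a pre-inner-product space core on `A` and use Cauchy–Schwarz.
  letI c : PreInnerProductSpace.Core ℂ A :=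
    { inner := fun x y => φ (star (ι 0 x) * ι 1 y)
      conj_inner_symm := by
        intro x y
        show (starRingEnd ℂ) (φ (star (ι 0 y) * ι 1 x)) = φ (star (ι 0 x) * ι 1 y)
        have h1 : φ (star (ι 1 x) * ι 0 y) = (starRingEnd ℂ) (φ (star (ι 0 y) * ι 1 x)) :=
          polar (ι 0 y) (ι 1 x)
        rw [← h1, ← map_star, ← map_star, off (star x) y 1 0 one_ne_zero]
      re_inner_nonneg := by
        intro x
        simpa using (psd x).1
      add_left := by
        intro x y z
        simp [star_add, add_mul]
      smul_left := by
        intro x y r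
        simp only [map_smul, star_smul, Complex.star_def, smul_mul_assoc, map_smul,
          smul_eq_mul] }
  letI : Inner ℂ A := InnerProductSpace.Core.toPreInner'
  have cs := InnerProductSpace.Core.inner_mul_inner_self_le (𝕜 := ℂ) (F := A) Y X
  have e1 : (inner ℂ Y X : ℂ) = φ (star (ι 0 Y) * ι 1 X) := rfl
  have e2 : (inner ℂ X Y : ℂ) = (starRingEnd ℂ) (inner ℂ Y X : ℂ) := (c.conj_inner_symm X Y).symm
  have e3 : ‖(inner ℂ X Y : ℂ)‖ = ‖(inner ℂ Y X : ℂ)‖ := by rw [e2, RCLike.norm_conj]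
  rw [e3, e1] at cs
  have e4 : RCLike.re (inner ℂ Y Y : ℂ) = (φ (star (ι 0 Y) * ι 1 Y)).re := rfl
  have e5 : RCLike.re (inner ℂ X X : ℂ) = (φ (star (ι 0 X) * ι 1 X)).re := rfl
  rw [e4, e5] at cs
  calc ‖φ (star (ι 0 Y) * ι 1 X)‖ ^ 2
      = ‖φ (star (ι 0 Y) * ι 1 X)‖ * ‖φ (star (ι 0 Y) * ι 1 X)‖ := by
        ring
    _ ≤ (φ (star (ι 0 Y) * ι 1 Y)).re * (φ (star (ι 0 X) * ι 1 X)).re := cs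
    _ = (φ (star (ι 0 X) * ι 1 X)).re * (φ (star (ι 0 Y) * ι 1 Y)).re := mul_comm _ _
end
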